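/- Let H₁, …, H_n be nonempty metric spaces, each with bounded geometry, such that every uniform net in each H_i (with the induced metric) satisfies property (H). Equip H = H₁ × … × H_n with the ℓ¹ combination of the distances d((x₁,…,x_n),(y₁,…,y_n)) = d₁(x₁,y₁) + … + d_n(x_n,y_n). Then every uniform net in H, with the induced metric, satisfies property (H). -/

import Mathlib

/-- A metric space satisfies property `(H_δ)` if there is a polynomial `P` such that
for all `r ≥ 0` and all `x, y`, the set of points `t` with `d(x,t) ≤ r` lying on a
`δ`-path from `x` to `y` is finite with at most `P(r)` elements. -/
def HasPropertyHdelta (X : Type*) [MetricSpace X] (δ : ℝ) : Prop :=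
  ∃ P : Polynomial ℝ, ∀ r : ℝ, 0 ≤ r → ∀ x y : X,
    {t : X | dist x t ≤ r ∧ dist x t + dist t y ≤ dist x y + δ}.Finite ∧
    ({t : X | dist x t ≤ r ∧ dist x t + dist t y ≤ dist x y + δ}).ncard ≤ P.eval r

/-- A metric space satisfies property `(H)` if it satisfies `(H_δ)` for every `δ ≥ 0`. -/
def HasPropertyH (X : Type*) [MetricSpace X] : Prop :=
  ∀ δ : ℝ, 0 ≤ δ → HasPropertyHdelta X δ

/-- A subset `Y` of a metric space is a uniform net if distinct points of `Y` are
uniformly separated and every point of the space is uniformly close to `Y`. -/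
def IsUniformNet {H : Type*} [MetricSpace H] (Y : Set H) : Prop :=
  ∃ r R : ℝ, 0 < r ∧ 0 < R ∧
    (∀ y ∈ Y, ∀ z ∈ Y, y ≠ z → r ≤ dist y z) ∧
    (∀ x : H, ∃ y ∈ Y, dist x y < R)

/-- A metric space has bounded geometry if uniformly separated subsets of balls of a
given radius have uniformly bounded cardinality. -/
def HasBoundedGeometry (H : Type*) [MetricSpace H] : Prop :=
  ∀ R r : ℝ, 0 < R → 0 < r → ∃ N : ℕ, ∀ (c : H) (s : Set H),
    s ⊆ Metric.closedBall c R → (∀ x ∈ s, ∀ y ∈ s, x ≠ y → r ≤ dist x y) →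
    s.Finite ∧ s.ncard ≤ N


theorem dist_l1' {n : ℕ} {H : Fin n → Type*} [∀ i, MetricSpace (H i)] (x y : PiLp 1 H) :
    dist x y = ∑ i, dist (x i) (y i) := by
  rw [PiLp.dist_eq_sum (by norm_num : (0:ℝ) < (1:ENNReal).toReal)]
  simp

theorem exists_maximal_separated' {X : Type*} [MetricSpace X] (A : Set X) {s : ℝ} (hs : 0 < s) :
    ∃ T ⊆ A, (∀ a ∈ T, ∀ b ∈ T, a ≠ b → s ≤ dist a b) ∧ ∀ x ∈ A, ∃ a ∈ T, dist x a < s := by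
  have hub : ∀ c ⊆ {T : Set X | T ⊆ A ∧ ∀ a ∈ T, ∀ b ∈ T, a ≠ b → s ≤ dist a b},
      IsChain (· ⊆ ·) c → ∃ ub ∈ {T : Set X | T ⊆ A ∧ ∀ a ∈ T, ∀ b ∈ T, a ≠ b → s ≤ dist a b},
      ∀ s ∈ c, s ⊆ ub := by
    intro c hc hchain
    refine ⟨⋃₀ c, ⟨Set.sUnion_subset fun t ht => (hc ht).1, ?_⟩, fun t ht => Set.subset_sUnion_of_mem ht⟩
    intro a ha b hb hne
    obtain ⟨t1, ht1, ha1⟩ := ha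
    obtain ⟨t2, ht2, hb2⟩ := hb
    rcases hchain.total ht1 ht2 with h | h
    · exact (hc ht2).2 a (h ha1) b hb2 hne
    · exact (hc ht1).2 a ha1 b (h hb2) hne
  obtain ⟨T, hT⟩ := zorn_subset
      {T : Set X | T ⊆ A ∧ ∀ a ∈ T, ∀ b ∈ T, a ≠ b → s ≤ dist a b} hub
  · refine ⟨T, hT.prop.1, hT.prop.2, ?_⟩
    intro x hx
    by_contra hcon
    push_neg at hcon
    have hxT : x ∉ T := by
      intro hxT
      have := hcon x hxT
      simp at this
      linarith
    have hmem : insert x T ∈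
        {T : Set X | T ⊆ A ∧ ∀ a ∈ T, ∀ b ∈ T, a ≠ b → s ≤ dist a b} := by
      constructor
      · exact Set.insert_subset hx hT.prop.1
      · intro a ha b hb hne
        rcases Set.mem_insert_iff.1 ha with ha' | ha'
        · rcases Set.mem_insert_iff.1 hb with hb' | hb'
          · exact absurd (ha'.trans hb'.symm) hne
          · subst ha'; exact hcon b hb'
        · rcases Set.mem_insert_iff.1 hb with hb' | hb'
          · subst hb'; rw [dist_comm]; exact hcon a ha'
          · exact hT.prop.2 a ha' b hb' hne
    have := hT.2 hmem (Set.subset_insert x T)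
    exact hxT (this (Set.mem_insert x T))

theorem finite_card_pi' {α : Type*} {n : ℕ} {β : Fin n → Type*}
    {s : Set α} {f : α → ∀ i, β i} (hf : Set.InjOn f s)
    {T : ∀ i, Set (β i)} (hT : ∀ i, (T i).Finite)
    (hmap : ∀ a ∈ s, ∀ i, f a i ∈ T i) :
    s.Finite ∧ s.ncard ≤ ∏ i, (T i).ncard := by
  classical
  have hsub : f '' s ⊆ ↑(Fintype.piFinset fun i => (hT i).toFinset) := by
    rintro g ⟨a, ha, rfl⟩
    simp only [Finset.mem_coe, Fintype.mem_piFinset, Set.Finite.mem_toFinset]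
    exact hmap a ha
  have himg : (f '' s).Finite := Set.Finite.subset (Finset.finite_toSet _) hsub
  have hfin : s.Finite := Set.Finite.of_finite_image himg hf
  refine ⟨hfin, ?_⟩
  calc s.ncard = (f '' s).ncard := (Set.ncard_image_of_injOn hf).symm
    _ ≤ (↑(Fintype.piFinset fun i => (hT i).toFinset) : Set (∀ i, β i)).ncard :=
        Set.ncard_le_ncard hsub (Finset.finite_toSet _)
    _ = (Fintype.piFinset fun i => (hT i).toFinset).card := Set.ncard_coe_finset _
    _ = ∏ i, ((hT i).toFinset).card := Fintype.card_piFinset _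
    _ = ∏ i, (T i).ncard := by
        refine Finset.prod_congr rfl fun i _ => ?_
        rw [Set.ncard_eq_toFinset_card (T i) (hT i)]


theorem hbg_pi' {n : ℕ} (H : Fin n → Type*) [∀ i, MetricSpace (H i)]
    (hbg : ∀ i, HasBoundedGeometry (H i)) : HasBoundedGeometry (PiLp 1 H) := by
  intro R r hR hr
  set s' : ℝ := r / (2 * n + 2) with hs'def
  have hs' : 0 < s' := by positivity
  choose N hN using fun i => hbg i R s' hR hs'
  refine ⟨∏ i, N i, fun c s hs hsep => ?_⟩
  have hcoord : ∀ x ∈ s, ∀ i, x i ∈ Metric.closedBall (c i) R := by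
    intro x hx i
    have hx' := hs hx
    rw [Metric.mem_closedBall] at hx' ⊢
    rw [dist_l1'] at hx'
    exact le_trans (Finset.single_le_sum (fun j _ => dist_nonneg) (Finset.mem_univ i)) hx'
  have hTex : ∀ i, ∃ T ⊆ Metric.closedBall (c i) R,
      (∀ a ∈ T, ∀ b ∈ T, a ≠ b → s' ≤ dist a b) ∧
      ∀ z ∈ Metric.closedBall (c i) R, ∃ a ∈ T, dist z a < s' :=
    fun i => exists_maximal_separated' _ hs'
  choose T hTsub hTsep hTcov using hTex
  have hTfin : ∀ i, (T i).Finite ∧ (T i).ncard ≤ N i :=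
    fun i => hN i (c i) (T i) (hTsub i) (hTsep i)
  have hchoice : ∀ (x : PiLp 1 H) (i : Fin n),
      ∃ a, x i ∈ Metric.closedBall (c i) R → a ∈ T i ∧ dist (x i) a < s' := by
    intro x i
    by_cases h : x i ∈ Metric.closedBall (c i) R
    · obtain ⟨a, ha, hd⟩ := hTcov i (x i) h
      exact ⟨a, fun _ => ⟨ha, hd⟩⟩
    · exact ⟨x i, fun h' => absurd h' h⟩
  choose f hf using hchoice
  have hmap : ∀ x ∈ s, ∀ i, f x i ∈ T i := fun x hx i => (hf x i (hcoord x hx i)).1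
  have hdist : ∀ x ∈ s, ∀ i, dist (x i) (f x i) < s' := fun x hx i => (hf x i (hcoord x hx i)).2
  have hinj : Set.InjOn f s := by
    intro a ha b hb hfe
    by_contra hne
    have hge := hsep a ha b hb hne
    have hlt : dist a b < r := by
      rw [dist_l1']
      have hle : ∀ i : Fin n, dist (a i) (b i) ≤ 2 * s' := by
        intro i
        have h1 := (hdist a ha i).le
        have h2 := (hdist b hb i).le
        have h3 : f a i = f b i := congrFun hfe i
        calc dist (a i) (b i) ≤ dist (a i) (f a i) + dist (f a i) (b i) := dist_triangle _ _ _
          _ = dist (a i) (f a i) + dist (b i) (f b i) := by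
              rw [h3, dist_comm (f b i) (b i)]
          _ ≤ 2 * s' := by linarith
      have hsum : ∑ i, dist (a i) (b i) ≤ (n : ℝ) * (2 * s') := by
        calc ∑ i, dist (a i) (b i) ≤ ∑ _i : Fin n, 2 * s' := Finset.sum_le_sum fun i _ => hle i
          _ = (n : ℝ) * (2 * s') := by simp [mul_comm]
      have hpos : (0:ℝ) < 2 * n + 2 := by positivity
      have heq : (n : ℝ) * (2 * s') = r * (2 * n) / (2 * n + 2) := by
        rw [hs'def]; ring
      have hfrac : r * (2 * n) / (2 * n + 2) < r := by
        rw [div_lt_iff₀ hpos]; nlinarith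
      linarith
    linarith
  obtain ⟨hfin, hcard⟩ := finite_card_pi' hinj (fun i => (hTfin i).1) hmap
  refine ⟨hfin, le_trans hcard ?_⟩
  exact Finset.prod_le_prod' fun i _ => (hTfin i).2

theorem prodNet_hasPropertyH' {n : ℕ} {H : Fin n → Type*} [∀ i, MetricSpace (H i)]
    (X : ∀ i, Set (H i)) (hX : ∀ i, HasPropertyH (X i)) :
    HasPropertyH {z : PiLp 1 H | ∀ i, z i ∈ X i} := by
  intro δ hδ
  choose P hP using fun i => hX i δ hδ
  refine ⟨∏ i, P i, fun r hr x y => ?_⟩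
  classical
  have hdistZ : ∀ a b : {z : PiLp 1 H | ∀ i, z i ∈ X i},
      dist a b = ∑ i, dist (a.1 i) (b.1 i) := by
    intro a b; rw [Subtype.dist_eq, dist_l1']
  set S := {t : {z : PiLp 1 H | ∀ i, z i ∈ X i} |
    dist x t ≤ r ∧ dist x t + dist t y ≤ dist x y + δ} with hSdef
  set f : {z : PiLp 1 H | ∀ i, z i ∈ X i} → ∀ i, (X i) :=
    fun t i => (⟨t.1 i, t.2 i⟩ : X i) with hfdef
  have hinj : Set.InjOn f S := by
    intro a _ b _ hab
    apply Subtype.ext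
    refine PiLp.ext fun i => ?_
    exact congrArg Subtype.val (congrFun hab i)
  set Si : ∀ i, Set (X i) := fun i =>
    {u : X i | dist (⟨x.1 i, x.2 i⟩ : X i) u ≤ r ∧
      dist (⟨x.1 i, x.2 i⟩ : X i) u + dist u (⟨y.1 i, y.2 i⟩ : X i) ≤
      dist (⟨x.1 i, x.2 i⟩ : X i) (⟨y.1 i, y.2 i⟩ : X i) + δ} with hSidef
  have hSi : ∀ i, (Si i).Finite ∧ (Si i).ncard ≤ (P i).eval r :=
    fun i => hP i r hr ⟨x.1 i, x.2 i⟩ ⟨y.1 i, y.2 i⟩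
  have hmap : ∀ t ∈ S, ∀ i, f t i ∈ Si i := by
    intro t ht i
    obtain ⟨h1, h2⟩ := ht
    simp only [hdistZ] at h1 h2
    have hd1 : dist ((⟨x.1 i, x.2 i⟩ : X i)) (f t i) = dist (x.1 i) (t.1 i) := Subtype.dist_eq _ _
    have hd2 : dist (f t i) ((⟨y.1 i, y.2 i⟩ : X i)) = dist (t.1 i) (y.1 i) := Subtype.dist_eq _ _
    have hd3 : dist ((⟨x.1 i, x.2 i⟩ : X i)) ((⟨y.1 i, y.2 i⟩ : X i)) = dist (x.1 i) (y.1 i) :=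
      Subtype.dist_eq _ _
    have hm1 : dist (x.1 i) (t.1 i) ≤ r :=
      le_trans (Finset.single_le_sum (fun j _ => dist_nonneg) (Finset.mem_univ i)) h1
    have hm2 : dist (x.1 i) (t.1 i) + dist (t.1 i) (y.1 i) ≤ dist (x.1 i) (y.1 i) + δ := by
      have hA : ∑ j ∈ Finset.univ.erase i, dist (x.1 j) (y.1 j) ≤
          ∑ j ∈ Finset.univ.erase i, (dist (x.1 j) (t.1 j) + dist (t.1 j) (y.1 j)) :=
        Finset.sum_le_sum fun j _ => dist_triangle _ _ _
      have e1 : (dist (x.1 i) (t.1 i) + dist (t.1 i) (y.1 i)) +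
          ∑ j ∈ Finset.univ.erase i, (dist (x.1 j) (t.1 j) + dist (t.1 j) (y.1 j)) =
          ∑ j, (dist (x.1 j) (t.1 j) + dist (t.1 j) (y.1 j)) :=
        Finset.add_sum_erase Finset.univ
          (fun j => dist (x.1 j) (t.1 j) + dist (t.1 j) (y.1 j)) (Finset.mem_univ i)
      have e2 : dist (x.1 i) (y.1 i) +
          ∑ j ∈ Finset.univ.erase i, dist (x.1 j) (y.1 j) = ∑ j, dist (x.1 j) (y.1 j) :=
        Finset.add_sum_erase Finset.univ
          (fun j => dist (x.1 j) (y.1 j)) (Finset.mem_univ i)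
      have e3 : ∑ j, (dist (x.1 j) (t.1 j) + dist (t.1 j) (y.1 j)) =
          ∑ j, dist (x.1 j) (t.1 j) + ∑ j, dist (t.1 j) (y.1 j) := Finset.sum_add_distrib
      linarith
    exact ⟨by rw [hd1]; exact hm1, by rw [hd1, hd2, hd3]; exact hm2⟩
  obtain ⟨hfin, hcard⟩ := finite_card_pi' hinj (fun i => (hSi i).1) hmap
  refine ⟨hfin, ?_⟩
  calc (S.ncard : ℝ) ≤ ((∏ i, (Si i).ncard : ℕ) : ℝ) := by exact_mod_cast hcard
    _ = ∏ i, ((Si i).ncard : ℝ) := by push_cast; ring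
    _ ≤ ∏ i, (P i).eval r := Finset.prod_le_prod (fun i _ => by positivity) (fun i _ => (hSi i).2)
    _ = (∏ i, P i).eval r := (Polynomial.eval_prod _ _ _).symm

theorem transfer' {W : Type*} [MetricSpace W] (hbgW : HasBoundedGeometry W)
    {X Y : Set W} {R rY : ℝ} (hR : 0 < R) (hrY : 0 < rY)
    (hsep : ∀ a ∈ Y, ∀ b ∈ Y, a ≠ b → rY ≤ dist a b)
    (hclose : ∀ y ∈ Y, ∃ x ∈ X, dist y x ≤ R)
    (hX : HasPropertyH X) : HasPropertyH Y := by
  classical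
  intro δ hδ
  obtain ⟨P, hP⟩ := hX (δ + 6 * R) (by linarith)
  obtain ⟨N, hN⟩ := hbgW R rY hR hrY
  refine ⟨Polynomial.C (N : ℝ) * P.comp (Polynomial.X + Polynomial.C (2 * R)),
    fun r hr x y => ?_⟩
  have hφ : ∀ t : Y, ∃ u : X, dist (t : W) (u : W) ≤ R := by
    intro t
    obtain ⟨u, hu, hud⟩ := hclose t.1 t.2
    exact ⟨⟨u, hu⟩, hud⟩
  choose φ hφd using hφ
  set S := {t : Y | dist x t ≤ r ∧ dist x t + dist t y ≤ dist x y + δ} with hSdef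
  obtain ⟨hTfin, hTcard⟩ := hP (r + 2 * R) (by linarith) (φ x) (φ y)
  set T := {u : X | dist (φ x) u ≤ r + 2 * R ∧
    dist (φ x) u + dist u (φ y) ≤ dist (φ x) (φ y) + (δ + 6 * R)} with hTdef
  have hφS : ∀ t ∈ S, φ t ∈ T := by
    intro t ht
    obtain ⟨h1, h2⟩ := ht
    rw [Subtype.dist_eq x t] at h1 h2
    rw [Subtype.dist_eq t y, Subtype.dist_eq x y] at h2
    have dxx := hφd x
    have dtt := hφd t
    have dyy := hφd y
    have k1 : dist (φ x).1 (φ t).1 ≤ dist (φ x).1 x.1 + dist x.1 t.1 + dist t.1 (φ t).1 :=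
      dist_triangle4 _ _ _ _
    have k2 : dist (φ t).1 (φ y).1 ≤ dist (φ t).1 t.1 + dist t.1 y.1 + dist y.1 (φ y).1 :=
      dist_triangle4 _ _ _ _
    have k3 : dist x.1 y.1 ≤ dist x.1 (φ x).1 + dist (φ x).1 (φ y).1 + dist (φ y).1 y.1 :=
      dist_triangle4 _ _ _ _
    have c1 : dist (φ x).1 x.1 = dist x.1 (φ x).1 := dist_comm _ _
    have c2 : dist (φ t).1 t.1 = dist t.1 (φ t).1 := dist_comm _ _
    have c3 : dist (φ y).1 y.1 = dist y.1 (φ y).1 := dist_comm _ _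
    constructor
    · rw [Subtype.dist_eq]
      linarith
    · rw [Subtype.dist_eq, Subtype.dist_eq, Subtype.dist_eq]
      linarith
  have hfib : ∀ u : X, {t : Y | φ t = u}.Finite ∧ {t : Y | φ t = u}.ncard ≤ N := by
    intro u
    have hsub : Subtype.val '' {t : Y | φ t = u} ⊆ Metric.closedBall u.1 R := by
      rintro w ⟨t, ht, rfl⟩
      rw [Metric.mem_closedBall]
      have h := hφd t
      rw [show φ t = u from ht] at h
      exact h
    have hsep' : ∀ a ∈ Subtype.val '' {t : Y | φ t = u},
        ∀ b ∈ Subtype.val '' {t : Y | φ t = u}, a ≠ b → rY ≤ dist a b := by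
      rintro a ⟨ta, _, rfl⟩ b ⟨tb, _, rfl⟩ hne
      exact hsep ta.1 ta.2 tb.1 tb.2 hne
    obtain ⟨hf1, hf2⟩ := hN u.1 _ hsub hsep'
    have hinj : Set.InjOn (Subtype.val) {t : Y | φ t = u} := Subtype.val_injective.injOn
    refine ⟨Set.Finite.of_finite_image hf1 hinj, ?_⟩
    rw [← Set.ncard_image_of_injOn hinj]
    exact hf2
  have hSsub : S ⊆ ⋃ u ∈ T, {t : Y | φ t = u} := by
    intro t ht
    exact Set.mem_biUnion (hφS t ht) rfl
  have hSfin : S.Finite := (hTfin.biUnion fun u _ => (hfib u).1).subset hSsub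
  refine ⟨hSfin, ?_⟩
  set sF := hSfin.toFinset with hsFdef
  have himg : ∀ b ∈ sF.image φ, (sF.filter (fun a => φ a = b)).card ≤ N := by
    intro b _
    have hsub2 : ↑(sF.filter (fun a => φ a = b)) ⊆ {t : Y | φ t = b} := by
      intro t ht
      simp only [Finset.coe_filter, Set.mem_setOf_eq] at ht
      exact ht.2
    calc (sF.filter (fun a => φ a = b)).card
        = (↑(sF.filter (fun a => φ a = b)) : Set Y).ncard := (Set.ncard_coe_finset _).symm
      _ ≤ {t : Y | φ t = b}.ncard := Set.ncard_le_ncard hsub2 (hfib b).1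
      _ ≤ N := (hfib b).2
  have hcard1 : sF.card ≤ N * (sF.image φ).card := Finset.card_le_mul_card_image sF N himg
  have himgT : ↑(sF.image φ) ⊆ T := by
    intro u hu
    simp only [Finset.coe_image, Set.mem_image] at hu
    obtain ⟨t, ht, rfl⟩ := hu
    have ht' : t ∈ S := by
      rw [hsFdef] at ht
      exact (Set.Finite.mem_toFinset hSfin).1 ht
    exact hφS t ht'
  have hcard2 : (sF.image φ).card ≤ T.ncard := by
    rw [← Set.ncard_coe_finset]
    exact Set.ncard_le_ncard himgT hTfin
  have hSncard : S.ncard = sF.card := Set.ncard_eq_toFinset_card S hSfin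
  have hfinal : (S.ncard : ℝ) ≤ (N : ℝ) * P.eval (r + 2 * R) := by
    have h4 : S.ncard ≤ N * T.ncard := by
      rw [hSncard]; exact le_trans hcard1 (Nat.mul_le_mul_left N hcard2)
    calc (S.ncard : ℝ) ≤ ((N * T.ncard : ℕ) : ℝ) := by exact_mod_cast h4
      _ = (N : ℝ) * (T.ncard : ℝ) := by push_cast; ring
      _ ≤ (N : ℝ) * P.eval (r + 2 * R) :=
          mul_le_mul_of_nonneg_left hTcard (by positivity)
  simpa [Polynomial.eval_mul, Polynomial.eval_comp] using hfinal

/-- If `H₁, …, H_n` are nonempty metric spaces with bounded geometry all of whose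
uniform nets satisfy property `(H)`, then every uniform net in the `ℓ¹` product
`H₁ × … × H_n` (the `PiLp 1` metric) satisfies property `(H)`. -/
theorem propertyH_of_uniform_net_in_l1_product {n : ℕ} (H : Fin n → Type*)
    [∀ i, MetricSpace (H i)] [∀ i, Nonempty (H i)]
    (hbg : ∀ i, HasBoundedGeometry (H i))
    (hnets : ∀ i (X : Set (H i)), IsUniformNet X → HasPropertyH X)
    (Y : Set (PiLp 1 H)) (hY : IsUniformNet Y) : HasPropertyH Y := by
  have hXi : ∀ i, ∃ T : Set (H i), (∀ a ∈ T, ∀ b ∈ T, a ≠ b → (1:ℝ) ≤ dist a b) ∧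
      ∀ x : H i, ∃ a ∈ T, dist x a < 1 := by
    intro i
    obtain ⟨T, -, hsep, hcov⟩ := exists_maximal_separated' (Set.univ : Set (H i)) one_pos
    exact ⟨T, hsep, fun x => hcov x (Set.mem_univ x)⟩
  choose Xi hXisep hXicov using hXi
  have hXiH : ∀ i, HasPropertyH (Xi i) := by
    intro i
    refine hnets i (Xi i) ⟨1, 2, one_pos, two_pos, hXisep i, fun x => ?_⟩
    obtain ⟨a, ha, hd⟩ := hXicov i x
    exact ⟨a, ha, by linarith⟩
  have hXP := prodNet_hasPropertyH' Xi hXiH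
  obtain ⟨rY, RY, hrY, hRY, hsepY, hcovY⟩ := hY
  have hRpos : (0:ℝ) < 2 * n + 1 := by positivity
  refine transfer' (hbg_pi' H hbg) hRpos hrY hsepY ?_ hXP
  intro y hy
  have hg : ∀ i, ∃ a ∈ Xi i, dist (y i) a < 1 := fun i => hXicov i (y i)
  choose g hg1 hg2 using hg
  refine ⟨WithLp.toLp 1 g, hg1, ?_⟩
  rw [dist_l1']
  show ∑ i, dist (y i) (g i) ≤ _
  have h1 : ∑ i, dist (y i) (g i) ≤ ∑ _i : Fin n, (1:ℝ) :=
    Finset.sum_le_sum fun i _ => (hg2 i).le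
  have h2 : (∑ _i : Fin n, (1:ℝ)) = n := by simp
  have h3 : (0:ℝ) ≤ n := Nat.cast_nonneg n
  linarith
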